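/- Let Ω be a type. For d ∈ Ω define partial functions on List Ω (modeled as functions List Ω → Option (List Ω)) by P_d(u) = some (u ++ [d]) and Q_d(u) = some v if u = v ++ [d] and none otherwise. Let A₁, …, A_n (n ≥ 1) be a nonempty sequence, each A_i of the form P_d or Q_d for some d ∈ Ω, and suppose the composite partial function applying A₁ first, then A₂, …, then A_n equals the identity (i.e. for every u ∈ List Ω the composite sends u to some u). Then one of the following holds: (i) A₁ = P_d and A_n = Q_d for some d ∈ Ω, and either n = 2 or n > 2 and the composite of A₂, …, A_{n−1} is the identity; or (ii) there is an index i with 1 ≤ i < n such that the composite of A₁, …, A_i and the composite of A_{i+1}, …, A_n are both the identity. -/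

import Mathlib

/-- The partial function `P_d` pushing `d` onto a stack: `u P_w = u ++ [d]`. -/
def push {Ω : Type*} (d : Ω) : List Ω → Option (List Ω) :=
  fun u => some (u ++ [d])

/-- The partial function `Q_d` popping `d` off a stack: `u Q_d = v` if `u = v ++ [d]`,
undefined otherwise. -/
def pop {Ω : Type*} [DecidableEq Ω] (d : Ω) : List Ω → Option (List Ω) :=
  fun u => if u.getLast? = some d then some u.dropLast else none

/-- The composite of a sequence of partial functions, applying the head of the list
first (Kleisli composition); the composite of the empty sequence is the identity. -/
def compAll {Ω : Type*} : List (List Ω → Option (List Ω)) → List Ω → Option (List Ω)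
  | [], u => some u
  | A :: rest, u => (A u).bind (compAll rest)

lemma compAll_append {Ω : Type*} (l₁ l₂ : List (List Ω → Option (List Ω))) (u : List Ω) :
    compAll (l₁ ++ l₂) u = (compAll l₁ u).bind (compAll l₂) := by
  induction l₁ generalizing u with
  | nil => simp [compAll]
  | cons A rest ih =>
    simp only [List.cons_append, compAll]
    cases h : A u with
    | none => simp
    | some v => simp [ih]

lemma compAll_one {Ω : Type*} (A : List Ω → Option (List Ω)) (v : List Ω) :
    compAll [A] v = A v := by
  cases h : A v <;> simp [compAll, h]

/-- Lemma 7.7: if a nonempty word `A₁ … A_n` in the generators `{P_d, Q_d | d ∈ Ω}` of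
`M_cf` represents the identity, then either (i) `A₁ = P_d`, `A_n = Q_d` for some `d`,
and `n = 2` or `n > 2` and `A₂ … A_{n-1}` represents the identity; or (ii) for some `i`
with `1 ≤ i < n`, both `A₁ … A_i` and `A_{i+1} … A_n` represent the identity. -/
theorem pushPop_word_repr_one {Ω : Type*} [DecidableEq Ω]
    (l : List (List Ω → Option (List Ω))) (hne : l ≠ [])
    (hgen : ∀ A ∈ l, (∃ d : Ω, A = push d) ∨ (∃ d : Ω, A = pop d))
    (hid : compAll l = fun u => some u) :
    (∃ d : Ω, l.head hne = push d ∧ l.getLast hne = pop d ∧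
      (l.length = 2 ∨ (2 < l.length ∧ compAll l.tail.dropLast = fun u => some u))) ∨
    (∃ i : ℕ, 1 ≤ i ∧ i < l.length ∧
      compAll (l.take i) = (fun u => some u) ∧
      compAll (l.drop i) = (fun u => some u)) := by
  classical
  have hidu : ∀ u, compAll l u = some u := fun u => congrFun hid u
  set T : ℕ → List Ω := fun i => (compAll (l.take i) []).getD [] with hTdef
  have htake : ∀ i (hi : i < l.length), l.take (i+1) = l.take i ++ [l[i]] := by
    intro i hi
    rw [List.take_succ, List.getElem?_eq_getElem hi]
    rfl
  have htot : ∀ i u, ∃ v, compAll (l.take i) u = some v := by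
    intro i u
    have h1 : compAll (l.take i ++ l.drop i) u = some u := by
      rw [List.take_append_drop]; exact hidu u
    rw [compAll_append] at h1
    cases h : compAll (l.take i) u with
    | none => rw [h] at h1; simp at h1
    | some v => exact ⟨v, rfl⟩
  -- every prefix composite is a shift
  have hP : ∀ i u, compAll (l.take i) u = some (u ++ T i) := by
    intro i
    induction i with
    | zero => intro u; simp [compAll, hTdef]
    | succ i ih =>
      by_cases hi : i < l.length
      · have key : ∀ u, compAll (l.take (i+1)) u = l[i] (u ++ T i) := by
          intro u
          rw [htake i hi, compAll_append, ih]
          exact compAll_one _ _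
        have hTsucc : some (T (i+1)) = l[i] (T i) := by
          obtain ⟨v, hv⟩ := htot (i+1) []
          have h2 : T (i+1) = v := by simp [hTdef, hv]
          rw [h2, ← hv, key]
          simp
        rcases hgen l[i] (List.getElem_mem hi) with ⟨e, he⟩ | ⟨e, he⟩
        · have hT : T (i+1) = T i ++ [e] := by
            rw [he] at hTsucc
            simpa [push] using hTsucc
          intro u
          rw [key, he, hT]
          simp [push]
        · rw [he] at hTsucc key
          have hlast : (T i).getLast? = some e := by
            by_contra hcon
            rw [pop, if_neg hcon] at hTsucc
            cases hTsucc
          have hT : T (i+1) = (T i).dropLast := by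
            rw [pop, if_pos hlast] at hTsucc
            exact Option.some.inj hTsucc
          have hTne : T i ≠ [] := by
            intro h; rw [h] at hlast; simp at hlast
          intro u
          rw [key u, pop,
            if_pos (by rw [List.getLast?_append_of_ne_nil _ hTne]; exact hlast),
            List.dropLast_append_of_ne_nil hTne, hT]
      · have h1 : l.take (i+1) = l.take i := by
          rw [List.take_of_length_le (by omega), List.take_of_length_le (by omega)]
        have hTe : T (i+1) = T i := by simp [hTdef, h1]
        intro u
        rw [hTe, h1]
        exact ih u
  -- the step relation
  have hS : ∀ i (hi : i < l.length),
      (∃ e, l[i] = push e ∧ T (i+1) = T i ++ [e]) ∨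
      (∃ e, l[i] = pop e ∧ (T i).getLast? = some e ∧ T (i+1) = (T i).dropLast) := by
    intro i hi
    have key : some (T (i+1)) = l[i] (T i) := by
      have h1 := hP (i+1) []
      rw [htake i hi, compAll_append, hP i []] at h1
      simp only [List.nil_append] at h1
      rw [← h1, Option.bind_some]
      exact compAll_one _ _
    rcases hgen l[i] (List.getElem_mem hi) with ⟨e, he⟩ | ⟨e, he⟩
    · refine Or.inl ⟨e, he, ?_⟩
      rw [he] at key
      simpa [push] using key
    · rw [he] at key
      have hlast : (T i).getLast? = some e := by
        by_contra hcon
        rw [pop, if_neg hcon] at key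
        cases key
      refine Or.inr ⟨e, he, hlast, ?_⟩
      rw [pop, if_pos hlast] at key
      exact Option.some.inj key
  have hT0 : T 0 = [] := by simp [hTdef, compAll]
  have hTn : T l.length = [] := by
    have h2 := hP l.length []
    rw [List.take_length, hidu []] at h2
    simpa using h2.symm
  by_cases hex : ∃ i, 1 ≤ i ∧ i < l.length ∧ T i = []
  · right
    obtain ⟨i, h1, h2, h3⟩ := hex
    refine ⟨i, h1, h2, ?_, ?_⟩
    · funext u; rw [hP i u, h3, List.append_nil]
    · funext u
      have hspl : compAll (l.take i ++ l.drop i) u = some u := by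
        rw [List.take_append_drop]; exact hidu u
      rw [compAll_append, hP i u, h3, List.append_nil] at hspl
      exact hspl
  · left
    push_neg at hex
    have h0 : 0 < l.length := List.length_pos_iff.mpr hne
    obtain ⟨d, hd, hT1⟩ : ∃ d, l[0]'h0 = push d ∧ T 1 = [d] := by
      rcases hS 0 h0 with ⟨e, he, hTe⟩ | ⟨e, he, hlast, _⟩
      · exact ⟨e, he, by rw [hTe, hT0]; rfl⟩
      · rw [hT0] at hlast; simp at hlast
    have hn2 : 2 ≤ l.length := by
      by_contra hcon
      have h1 : l.length = 1 := by omega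
      rw [h1] at hTn
      rw [hTn] at hT1
      cases hT1
    -- head invariant
    have hHead : ∀ i, 1 ≤ i → i < l.length → (T i).head? = some d := by
      intro i
      induction i with
      | zero => intro h1 _; exact absurd h1 (by omega)
      | succ k ih =>
        intro _ hk1
        by_cases hk : k = 0
        · subst hk; rw [hT1]; rfl
        · have hk' : 1 ≤ k := by omega
          have hkn : k < l.length := by omega
          have hTk := ih hk' hkn
          have hTkne : T k ≠ [] := hex k hk' hkn
          obtain ⟨x, xs, hx⟩ := List.exists_cons_of_ne_nil hTkne
          rcases hS k hkn with ⟨e, _, hTe⟩ | ⟨e, _, hlast, hTe⟩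
          · rw [hTe, hx]
            rw [hx] at hTk
            simpa using hTk
          · have hTk1ne : T (k+1) ≠ [] := hex (k+1) (by omega) hk1
            rw [hTe, hx] at hTk1ne ⊢
            rw [hx] at hTk
            cases xs with
            | nil => simp at hTk1ne
            | cons y ys =>
              rw [List.dropLast_cons₂]
              simpa using hTk
    -- last letter
    have hlt : l.length - 1 < l.length := by omega
    have hEq : l.length - 1 + 1 = l.length := by omega
    obtain ⟨hlastgen, hTn1⟩ : l[l.length - 1]'hlt = pop d ∧ T (l.length - 1) = [d] := by
      rcases hS (l.length - 1) hlt with ⟨e, he, hTe⟩ | ⟨e, he, hlast, hTe⟩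
      · rw [hEq, hTn] at hTe
        exact absurd hTe.symm (by simp)
      · rw [hEq, hTn] at hTe
        have hTne : T (l.length - 1) ≠ [] := hex _ (by omega) hlt
        have hlen : (T (l.length - 1)).length = 1 := by
          have h4 := congrArg List.length hTe
          simp [List.length_dropLast] at h4
          have h5 : (T (l.length - 1)).length ≠ 0 := by
            simpa [List.length_eq_zero_iff] using hTne
          omega
        obtain ⟨x, hx⟩ := List.length_eq_one_iff.mp hlen
        have hh := hHead (l.length - 1) (by omega) hlt
        rw [hx] at hh hlast
        simp at hh hlast
        subst hh; subst hlast
        exact ⟨he, hx⟩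
    refine ⟨d, ?_, ?_, ?_⟩
    · rw [List.head_eq_getElem]; exact hd
    · rw [List.getLast_eq_getElem]; exact hlastgen
    · rcases eq_or_lt_of_le hn2 with h2 | h2
      · exact Or.inl h2.symm
      · refine Or.inr ⟨h2, ?_⟩
        set m := l.tail.dropLast with hm
        have hmlen : m.length = l.length - 2 := by
          simp only [hm, List.length_dropLast, List.length_tail]
          omega
        have hmget : ∀ j (hj : j < m.length),
            m[j] = l[j+1]'(by rw [hmlen] at hj; omega) := by
          intro j hj
          simp only [hm]
          rw [List.getElem_dropLast, List.getElem_tail]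
        have hM : ∀ j, j ≤ l.length - 2 → ∀ u,
            compAll (m.take j) u = some (u ++ (T (j+1)).tail) := by
          intro j
          induction j with
          | zero => intro _ u; simp [compAll, hT1]
          | succ j ih =>
            intro hj u
            have hjm : j < m.length := by omega
            have hj1n : j + 1 < l.length := by omega
            have htakem : m.take (j+1) = m.take j ++ [m[j]] := by
              rw [List.take_succ, List.getElem?_eq_getElem hjm]; rfl
            rw [htakem, compAll_append, ih (by omega) u, Option.bind_some, compAll_one]
            have hTj1ne : T (j+1) ≠ [] := hex _ (by omega) hj1n
            have hTj2ne : T (j+2) ≠ [] := hex _ (by omega) (by omega)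
            obtain ⟨x, xs, hx⟩ := List.exists_cons_of_ne_nil hTj1ne
            rcases hS (j+1) hj1n with ⟨e, he, hTe⟩ | ⟨e, he, hlast, hTe⟩
            · rw [hmget j hjm, he, hTe, hx]
              simp [push]
            · have hxs : xs ≠ [] := by
                intro h
                rw [hTe, hx, h] at hTj2ne
                simp at hTj2ne
              have hxl : xs.getLast? = some e := by
                rw [hx, show x :: xs = [x] ++ xs from rfl,
                  List.getLast?_append_of_ne_nil _ hxs] at hlast
                exact hlast
              rw [hmget j hjm, he, pop, hx]
              rw [if_pos (by
                simp only [List.tail_cons]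
                rw [List.getLast?_append_of_ne_nil _ hxs]; exact hxl)]
              simp only [List.tail_cons]
              rw [List.dropLast_append_of_ne_nil hxs, hTe, hx]
              obtain ⟨y, ys, hy⟩ := List.exists_cons_of_ne_nil hxs
              rw [hy, List.dropLast_cons₂]
              simp
        have hmeq : m.take (l.length - 2) = m := by
          rw [← hmlen, List.take_length]
        have hIdx : l.length - 2 + 1 = l.length - 1 := by omega
        funext u
        have h3 := hM (l.length - 2) le_rfl u
        rw [hmeq, hIdx, hTn1] at h3
        simpa using h3
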